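/- (Entropy dimension of a bi-free central limit family.) Let A ∈ M_{n+m}(ℝ) be symmetric positive semidefinite with all diagonal entries equal to 1. Then (n+m) + limsup_{ε→0⁺} [((n+m)/2)log(2πe) + (1/2)log det(εI + A)] / |log √ε| = rank(A). Consequently, a self-adjoint bi-free central limit family with covariance matrix A has non-microstate bi-free entropy dimension δ* = rank(A). -/

import Mathlib

open Filter Real Set Matrix

lemma det_eps (N : ℕ) (A : Matrix (Fin N) (Fin N) ℝ) (hA : A.IsHermitian) (ε : ℝ) :
    (ε • (1 : Matrix (Fin N) (Fin N) ℝ) + A).det = ∏ i, (ε + hA.eigenvalues i) := by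
  conv_lhs => rw [hA.spectral_theorem, Unitary.conjStarAlgAut_apply]
  have hU : (hA.eigenvectorUnitary : Matrix (Fin N) (Fin N) ℝ) *
      star (hA.eigenvectorUnitary : Matrix (Fin N) (Fin N) ℝ) = 1 :=
    (Matrix.mem_unitaryGroup_iff).mp (hA.eigenvectorUnitary).2
  have : ε • (1 : Matrix (Fin N) (Fin N) ℝ) +
      (hA.eigenvectorUnitary : Matrix (Fin N) (Fin N) ℝ) *
        Matrix.diagonal (RCLike.ofReal ∘ hA.eigenvalues) *
        star (hA.eigenvectorUnitary : Matrix (Fin N) (Fin N) ℝ)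
      = (hA.eigenvectorUnitary : Matrix (Fin N) (Fin N) ℝ) *
        diagonal (fun i => ε + hA.eigenvalues i) *
        star (hA.eigenvectorUnitary : Matrix (Fin N) (Fin N) ℝ) := by
    have : diagonal (fun i => ε + hA.eigenvalues i)
        = ε • (1 : Matrix (Fin N) (Fin N) ℝ) + Matrix.diagonal (RCLike.ofReal ∘ hA.eigenvalues) := by
      rw [smul_one_eq_diagonal, ← diagonal_add]
      rfl
    rw [this, mul_add, add_mul, mul_assoc _ _ (star _)]
    congr 1
    rw [Matrix.mul_smul, mul_one, Matrix.smul_mul, hU]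
  rw [this, det_mul_right_comm, hU, one_mul, det_diagonal]

lemma aux_alg (Cv L d kk : ℝ) (hd : d ≠ 0) :
    (Cv + 1/2 * ((kk : ℝ) * d + L)) / (-d/2) = (2*Cv + L) / (-d) - kk := by
  field_simp
  have hd' : -d ≠ 0 := neg_ne_zero.mpr hd
  ring

theorem stmt14 (n m : ℕ) (A : Matrix (Fin (n+m)) (Fin (n+m)) ℝ)
    (hsymm : A.IsSymm) (hA : A.PosSemidef) (hdiag : ∀ i, A i i = 1) :
    (n + m : ℝ) +
      Filter.limsup
        (fun ε : ℝ =>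
          ((n+m : ℝ)/2 * Real.log (2 * π * Real.exp 1)
            + (1/2) * Real.log ((ε • (1 : Matrix (Fin (n+m)) (Fin (n+m)) ℝ) + A).det))
          / |Real.log (Real.sqrt ε)|)
        (nhdsWithin 0 (Ioi 0))
      = (A.rank : ℝ) := by
  have hherm : A.IsHermitian := hA.1
  have hnonneg : ∀ i, 0 ≤ hherm.eigenvalues i := fun i => hA.eigenvalues_nonneg i
  set Z : Finset (Fin (n+m)) := Finset.univ.filter (fun i => hherm.eigenvalues i = 0) with hZ
  set k : ℕ := Z.card with hk
  set Zc : Finset (Fin (n+m)) := Finset.univ.filter (fun i => ¬ hherm.eigenvalues i = 0) with hZc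
  have hpos : ∀ i ∈ Zc, 0 < hherm.eigenvalues i := by
    intro i hi
    rw [hZc, Finset.mem_filter] at hi
    exact lt_of_le_of_ne (hnonneg i) (Ne.symm hi.2)
  have hrank : (A.rank : ℝ) = ((n+m : ℕ) : ℝ) - (k : ℝ) := by
    have h1 : A.rank = Fintype.card {i // hherm.eigenvalues i ≠ 0} :=
      hherm.rank_eq_card_non_zero_eigs
    have h2 : Fintype.card {i // hherm.eigenvalues i ≠ 0} = Zc.card := by
      rw [Fintype.card_subtype]
    have h3 : Z.card + Zc.card = n + m := by
      rw [hZ, hZc, Finset.card_filter_add_card_filter_not]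
      simp
    have h4 : A.rank + k = n + m := by omega
    push_cast [← h4]
    ring
  set C : ℝ := (n+m : ℝ)/2 * Real.log (2 * π * Real.exp 1) with hC
  set P : ℝ → ℝ := fun ε => ∏ i ∈ Zc, (ε + hherm.eigenvalues i) with hP
  have hPpos : ∀ ε : ℝ, 0 ≤ ε → 0 < P ε := by
    intro ε hε
    exact Finset.prod_pos fun i hi => by linarith [hpos i hi]
  have htend : Tendsto (fun ε : ℝ => (2*C + Real.log (P ε)) / (-Real.log ε) - (k:ℝ))
      (nhdsWithin 0 (Ioi 0)) (nhds (-(k:ℝ))) := by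
    have hnum : Tendsto (fun ε : ℝ => 2*C + Real.log (P ε)) (nhdsWithin 0 (Ioi 0))
        (nhds (2*C + Real.log (P 0))) := by
      apply Tendsto.mono_left _ nhdsWithin_le_nhds
      apply Tendsto.const_add
      apply (Real.continuousAt_log (ne_of_gt (hPpos 0 le_rfl))).tendsto.comp
      have : Continuous P := by
        apply continuous_finset_prod
        intro i _
        exact continuous_id.add continuous_const
      exact this.continuousAt
    have hden : Tendsto (fun ε : ℝ => -Real.log ε) (nhdsWithin 0 (Ioi 0)) atTop :=
      tendsto_neg_atBot_atTop.comp Real.tendsto_log_nhdsGT_zero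
    have := Tendsto.div_atTop hnum hden
    have h0 : (0:ℝ) - (k:ℝ) = -(k:ℝ) := by ring
    rw [← h0]
    exact this.sub_const _
  have heq : ∀ᶠ ε in nhdsWithin (0:ℝ) (Ioi 0),
      (C + (1/2) * Real.log ((ε • (1 : Matrix (Fin (n+m)) (Fin (n+m)) ℝ) + A).det))
        / |Real.log (Real.sqrt ε)|
      = (2*C + Real.log (P ε)) / (-Real.log ε) - (k:ℝ) := by
    filter_upwards [Ioo_mem_nhdsGT_of_mem (by constructor <;> norm_num : (0:ℝ) ∈ Ico (0:ℝ) 1)]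
      with ε hε
    obtain ⟨hε0, hε1⟩ := hε
    have hlogneg : Real.log ε < 0 := Real.log_neg hε0 hε1
    have hdet : ((ε • (1 : Matrix (Fin (n+m)) (Fin (n+m)) ℝ) + A).det) = ε ^ k * P ε := by
      rw [det_eps (n+m) A hherm]
      rw [← Finset.prod_filter_mul_prod_filter_not Finset.univ
        (fun i => hherm.eigenvalues i = 0)]
      congr 1
      rw [Finset.prod_congr rfl (fun i hi => ?_), Finset.prod_const, hk]
      rw [Finset.mem_filter] at hi
      rw [hi.2, add_zero]
    have hsq : Real.log (Real.sqrt ε) = Real.log ε / 2 := Real.log_sqrt hε0.le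
    have habs : |Real.log (Real.sqrt ε)| = -(Real.log ε) / 2 := by
      rw [hsq, abs_of_neg (by linarith)]
      ring
    rw [hdet, habs, Real.log_mul (by positivity) (ne_of_gt (hPpos ε hε0.le)), Real.log_pow]
    exact aux_alg C (Real.log (P ε)) (Real.log ε) k (ne_of_lt hlogneg)
  rw [Filter.limsup_congr heq, htend.limsup_eq, hrank]
  push_cast
  ring
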